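/- arXiv:0707.0556 — 2 statements merged into one kernel-verified Lean document; each statement's English description precedes it below -/
import Mathlib

section
/- A w-bisimulation up to w-bisimilarity is contained in w-bisimilarity: if R is symmetric and whenever R p q and weak-step p α p' there exists q' with weak-step q α q' and p' (≈ ∘ R ∘ ≈) q', then R ⊆ ≈. -/
/-- Reflexive-transitive closure of τ-steps. -/
def TauStar {P A : Type} (step : P → A → P → Prop) (τ : A) : P → P → Prop :=
  Relation.ReflTransGen (fun p q => step p τ q)

/-- Weak step: τ*-closure for τ, and τ* ∘ step α ∘ τ* otherwise. -/
def Weak {P A : Type} (step : P → A → P → Prop) (τ : A) (α : A) (p q : P) : Prop :=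
  (α = τ ∧ TauStar step τ p q) ∨
  (α ≠ τ ∧ ∃ a b, TauStar step τ p a ∧ step a α b ∧ TauStar step τ b q)

/-- Labelled bisimulation: symmetric, strong challenge, weak response. -/
def IsBisim {P A : Type} (step : P → A → P → Prop) (τ : A) (R : P → P → Prop) : Prop :=
  Symmetric R ∧
  ∀ p q α p', R p q → step p α p' → ∃ q', Weak step τ α q q' ∧ R p' q'

/-- Weak bisimilarity: the union of all bisimulations. -/
def Bisim {P A : Type} (step : P → A → P → Prop) (τ : A) (p q : P) : Prop :=
  ∃ R, IsBisim step τ R ∧ R p q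

/-- A derivative: reachable by finitely many weak steps. -/
def Deriv {P A : Type} (step : P → A → P → Prop) (τ : A) : P → P → Prop :=
  Relation.ReflTransGen (fun a b => ∃ α, Weak step τ α a b)

/-- w-bisimulation: both challenge and response are weak. -/
def IsWBisim {P A : Type} (step : P → A → P → Prop) (τ : A) (R : P → P → Prop) : Prop :=
  Symmetric R ∧
  ∀ p q α p', R p q → Weak step τ α p p' → ∃ q', Weak step τ α q q' ∧ R p' q'

/-- w-bisimilarity: the union of all w-bisimulations. -/
def WBisim {P A : Type} (step : P → A → P → Prop) (τ : A) (p q : P) : Prop :=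
  ∃ R, IsWBisim step τ R ∧ R p q


theorem WBisim.symm' {P A : Type} {step : P → A → P → Prop} {τ : A} {p q : P}
    (h : WBisim step τ p q) : WBisim step τ q p := by
  obtain ⟨R, hR, hpq⟩ := h
  exact ⟨R, hR, hR.1 hpq⟩

theorem WBisim.step' {P A : Type} {step : P → A → P → Prop} {τ : A} {p q p' : P} {α : A}
    (h : WBisim step τ p q) (hs : Weak step τ α p p') :
    ∃ q', Weak step τ α q q' ∧ WBisim step τ p' q' := by
  obtain ⟨R, hR, hpq⟩ := h
  obtain ⟨q', hq', hr⟩ := hR.2 p q α p' hpq hs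
  exact ⟨q', hq', R, hR, hr⟩

theorem WBisim.trans' {P A : Type} {step : P → A → P → Prop} {τ : A} {p q r : P}
    (h1 : WBisim step τ p q) (h2 : WBisim step τ q r) : WBisim step τ p r := by
  refine ⟨fun a b => ∃ c, WBisim step τ a c ∧ WBisim step τ c b, ⟨?_, ?_⟩, q, h1, h2⟩
  · rintro a b ⟨c, h1, h2⟩
    exact ⟨c, h2.symm', h1.symm'⟩
  · rintro a b α a' ⟨c, hac, hcb⟩ hs
    obtain ⟨c', hc', hac'⟩ := hac.step' hs
    obtain ⟨b', hb', hcb'⟩ := hcb.step' hc'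
    exact ⟨b', hb', c', hac', hcb'⟩

theorem WBisim.refl' {P A : Type} (step : P → A → P → Prop) (τ : A) (p : P) :
    WBisim step τ p p := by
  refine ⟨Eq, ⟨fun a b h => h.symm, ?_⟩, rfl⟩
  rintro a b α a' rfl hs
  exact ⟨a', hs, rfl⟩

/-- A w-bisimulation up to w-bisimilarity is contained in w-bisimilarity. -/
theorem wbisim_up_to_wbisim {P A : Type} (step : P → A → P → Prop) (τ : A)
    (R : P → P → Prop) (hsym : Symmetric R)
    (hupto : ∀ p q α p', R p q → Weak step τ α p p' →
      ∃ q', Weak step τ α q q' ∧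
        ∃ a b, WBisim step τ p' a ∧ R a b ∧ WBisim step τ b q') :
    ∀ p q, R p q → WBisim step τ p q := by
  intro p q hpq
  refine ⟨fun x y => ∃ a b, WBisim step τ x a ∧ R a b ∧ WBisim step τ b y, ⟨?_, ?_⟩,
    p, q, WBisim.refl' step τ p, hpq, WBisim.refl' step τ q⟩
  · rintro x y ⟨a, b, hxa, hab, hby⟩
    exact ⟨b, a, hby.symm', hsym hab, hxa.symm'⟩
  · rintro x y α x' ⟨a, b, hxa, hab, hby⟩ hs
    obtain ⟨a', ha', hxa'⟩ := hxa.step' hs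
    obtain ⟨b', hb', u, v, hau, huv, hvb⟩ := hupto a b α a' hab ha'
    obtain ⟨y', hy', hby'⟩ := hby.step' hb'
    exact ⟨y', hy', u, v, hxa'.trans' hau, huv, hvb.trans' hby'⟩
end

section
/- Determinacy for compatible-action systems where inputs and outputs commute strongly implies confluence: if p is determinate (hence τ-inert), and all pairs of distinct compatible non-τ actions satisfy the one-step commutation squares up to structural equivalence ≡ ⊆ ≈, then p is confluent. -/
/-- Confluence: all compatible weak steps from any derivative can be closed
up to residuals and bisimilarity. -/
def Confluent {P A : Type} (step : P → A → P → Prop) (τ : A)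
    (compat : A → A → Prop) (res : A → A → A) (p : P) : Prop :=
  ∀ q, Deriv step τ p q → ∀ α β q₁ q₂, compat α β →
    Weak step τ α q q₁ → Weak step τ β q q₂ →
    ∃ q₃ q₄, Weak step τ (res β α) q₁ q₃ ∧ Weak step τ (res α β) q₂ q₄ ∧
      Bisim step τ q₃ q₄

/-- Weak transition along a finite sequence of (non-τ) actions;
the empty sequence is weak τ-closure. -/
def WeakSeq {P A : Type} (step : P → A → P → Prop) (τ : A) :
    List A → P → P → Prop
  | [], p, q => TauStar step τ p q
  | α :: s, p, q => ∃ r, Weak step τ α p r ∧ WeakSeq step τ s r q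

/-- Determinacy: performing twice the same sequence of non-τ interactions
leads to bisimilar programs. -/
def Determinate {P A : Type} (step : P → A → P → Prop) (τ : A) (p : P) : Prop :=
  ∀ s : List A, (∀ α ∈ s, α ≠ τ) → ∀ p₁ p₂,
    WeakSeq step τ s p p₁ → WeakSeq step τ s p p₂ → Bisim step τ p₁ p₂

section Aux

variable {P A : Type} {step : P → A → P → Prop} {τ : A}

lemma weak_tauStar {p q : P} (h : Weak step τ τ p q) : TauStar step τ p q := by
  rcases h with ⟨_, h⟩ | ⟨hne, _⟩
  · exact h
  · exact absurd rfl hne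

lemma step_weak {p q : P} {α : A} (h : step p α q) : Weak step τ α p q := by
  by_cases hα : α = τ
  · exact Or.inl ⟨hα, Relation.ReflTransGen.single (hα ▸ h)⟩
  · exact Or.inr ⟨hα, p, q, Relation.ReflTransGen.refl, h, Relation.ReflTransGen.refl⟩

lemma weak_tau_refl (p : P) : Weak step τ τ p p :=
  Or.inl ⟨rfl, Relation.ReflTransGen.refl⟩

lemma tau_weak {p q : P} (h : TauStar step τ p q) : Weak step τ τ p q := Or.inl ⟨rfl, h⟩

lemma weak_comp_tau_left {p q r : P} {α : A} (h1 : TauStar step τ p q)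
    (h2 : Weak step τ α q r) : Weak step τ α p r := by
  rcases h2 with ⟨hτ, h2⟩ | ⟨hne, a, b, t1, s1, t2⟩
  · exact Or.inl ⟨hτ, Relation.ReflTransGen.trans h1 h2⟩
  · exact Or.inr ⟨hne, a, b, Relation.ReflTransGen.trans h1 t1, s1, t2⟩

lemma weak_comp_tau_right {p q r : P} {α : A} (h1 : Weak step τ α p q)
    (h2 : TauStar step τ q r) : Weak step τ α p r := by
  rcases h1 with ⟨hτ, h1⟩ | ⟨hne, a, b, t1, s1, t2⟩
  · exact Or.inl ⟨hτ, Relation.ReflTransGen.trans h1 h2⟩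
  · exact Or.inr ⟨hne, a, b, t1, s1, Relation.ReflTransGen.trans t2 h2⟩

lemma isBisim_tauStar {R : P → P → Prop} (hR : IsBisim step τ R) {p q p' : P}
    (hpq : R p q) (h : TauStar step τ p p') :
    ∃ q', TauStar step τ q q' ∧ R p' q' := by
  induction h with
  | refl => exact ⟨q, Relation.ReflTransGen.refl, hpq⟩
  | tail _ hbc ih =>
    obtain ⟨q', hq', hR'⟩ := ih
    obtain ⟨q'', hw, hR''⟩ := hR.2 _ _ _ _ hR' hbc
    exact ⟨q'', Relation.ReflTransGen.trans hq' (weak_tauStar hw), hR''⟩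

lemma isBisim_weak {R : P → P → Prop} (hR : IsBisim step τ R) {p q p' : P} {α : A}
    (hpq : R p q) (h : Weak step τ α p p') :
    ∃ q', Weak step τ α q q' ∧ R p' q' := by
  rcases h with ⟨hτ, h⟩ | ⟨hne, a, b, t1, s1, t2⟩
  · obtain ⟨q', hq', hR'⟩ := isBisim_tauStar hR hpq h
    exact ⟨q', Or.inl ⟨hτ, hq'⟩, hR'⟩
  · obtain ⟨qa, hqa, hRa⟩ := isBisim_tauStar hR hpq t1
    obtain ⟨qb, hqb, hRb⟩ := hR.2 _ _ _ _ hRa s1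
    obtain ⟨q', hq', hR'⟩ := isBisim_tauStar hR hRb t2
    exact ⟨q', weak_comp_tau_left hqa (weak_comp_tau_right hqb hq'), hR'⟩

lemma bisim_symm {p q : P} (h : Bisim step τ p q) : Bisim step τ q p := by
  obtain ⟨R, hR, hpq⟩ := h
  exact ⟨R, hR, hR.1 hpq⟩

lemma bisim_weak {p q p' : P} {α : A} (h : Bisim step τ p q) (hw : Weak step τ α p p') :
    ∃ q', Weak step τ α q q' ∧ Bisim step τ p' q' := by
  obtain ⟨R, hR, hpq⟩ := h
  obtain ⟨q', hq', hR'⟩ := isBisim_weak hR hpq hw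
  exact ⟨q', hq', R, hR, hR'⟩

lemma bisim_trans {p q r : P} (h1 : Bisim step τ p q) (h2 : Bisim step τ q r) :
    Bisim step τ p r := by
  refine ⟨fun a c => ∃ b, Bisim step τ a b ∧ Bisim step τ b c, ⟨?_, ?_⟩, q, h1, h2⟩
  · rintro a c ⟨b, hab, hbc⟩
    exact ⟨b, bisim_symm hbc, bisim_symm hab⟩
  · rintro a c α a' ⟨b, ⟨R1, hR1, hab⟩, hbc⟩ hst
    obtain ⟨b', hwb, hR1'⟩ := hR1.2 _ _ _ _ hab hst
    obtain ⟨c', hwc, hbc'⟩ := bisim_weak hbc hwb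
    exact ⟨c', hwc, b', ⟨R1, hR1, hR1'⟩, hbc'⟩

lemma weakSeq_tau {s : List A} {p q q' : P} (h : WeakSeq step τ s p q)
    (ht : TauStar step τ q q') : WeakSeq step τ s p q' := by
  induction s generalizing p with
  | nil => exact Relation.ReflTransGen.trans h ht
  | cons α s ih =>
    obtain ⟨r, h1, h2⟩ := h
    exact ⟨r, h1, ih h2⟩

lemma weakSeq_append {s : List A} {p q q' : P} {α : A} (h : WeakSeq step τ s p q)
    (hw : Weak step τ α q q') : WeakSeq step τ (s ++ [α]) p q' := by
  induction s generalizing p with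
  | nil => exact ⟨q', weak_comp_tau_left h hw, Relation.ReflTransGen.refl⟩
  | cons γ s ih =>
    obtain ⟨r, h1, h2⟩ := h
    exact ⟨r, h1, ih h2⟩

lemma deriv_weakSeq {p q : P} (h : Deriv step τ p q) :
    ∃ s, (∀ α ∈ s, α ≠ τ) ∧ WeakSeq step τ s p q := by
  induction h with
  | refl => exact ⟨[], by simp, Relation.ReflTransGen.refl⟩
  | tail _ hbc ih =>
    obtain ⟨s, hs, hws⟩ := ih
    obtain ⟨γ, hw⟩ := hbc
    by_cases hγ : γ = τ
    · exact ⟨s, hs, weakSeq_tau hws (weak_tauStar (hγ ▸ hw))⟩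
    · refine ⟨s ++ [γ], ?_, weakSeq_append hws hw⟩
      intro a ha
      rcases List.mem_append.1 ha with ha | ha
      · exact hs a ha
      · rw [List.mem_singleton] at ha
        exact ha ▸ hγ

end Aux

/-- Determinacy plus strong commutation of inputs/outputs implies confluence. -/
theorem determinate_implies_confluent {P A : Type}
    (step : P → A → P → Prop) (τ : A)
    (compat : A → A → Prop) (res : A → A → A)
    (equiv : P → P → Prop)
    (hrefl : ∀ α, compat α α)
    (hres_self : ∀ α, res α α = τ)
    (hres_tau : ∀ α, res α τ = α)
    (htau_res : ∀ α, res τ α = τ)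
    (hequiv_bisim : ∀ a b, equiv a b → Bisim step τ a b)
    (p : P)
    (hdet : Determinate step τ p)
    (hcomm : ∀ q, Deriv step τ p q → ∀ α β q₁ q₂,
      α ≠ β → α ≠ τ → β ≠ τ → compat α β →
      step q α q₁ → step q β q₂ →
      ∃ q₃ q₄, step q₁ (res β α) q₃ ∧ step q₂ (res α β) q₄ ∧ equiv q₃ q₄)
    (htaucomm : ∀ q, Deriv step τ p q → ∀ β q₁' q₂', β ≠ τ →
      TauStar step τ q q₁' → step q β q₂' →
      ∃ q₃', step q₁' β q₃' ∧ TauStar step τ q₂' q₃') :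
    Confluent step τ compat res p := by
  intro q hq α β q₁ q₂ hcab hw1 hw2
  obtain ⟨s, hs, hws⟩ := deriv_weakSeq hq
  by_cases hα : α = τ
  · by_cases hβ : β = τ
    · -- both τ
      rw [hα] at hw1
      rw [hβ] at hw2
      refine ⟨q₁, q₂, ?_, ?_, ?_⟩
      · rw [hα, hβ, hres_self]; exact weak_tau_refl _
      · rw [hα, hβ, hres_self]; exact weak_tau_refl _
      · exact hdet s hs q₁ q₂ (weakSeq_tau hws (weak_tauStar hw1))
          (weakSeq_tau hws (weak_tauStar hw2))
    · -- α = τ, β ≠ τ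
      rw [hα] at hw1
      have hqq1 : Bisim step τ q q₁ :=
        hdet s hs q q₁ hws (weakSeq_tau hws (weak_tauStar hw1))
      obtain ⟨q₃, hw3, hb⟩ := bisim_weak hqq1 hw2
      refine ⟨q₃, q₂, ?_, ?_, ?_⟩
      · rw [hα, hres_tau]; exact hw3
      · rw [hα, htau_res]; exact weak_tau_refl _
      · exact bisim_symm hb
  · by_cases hβ : β = τ
    · -- α ≠ τ, β = τ
      rw [hβ] at hw2
      have hqq2 : Bisim step τ q q₂ :=
        hdet s hs q q₂ hws (weakSeq_tau hws (weak_tauStar hw2))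
      obtain ⟨q₄, hw4, hb⟩ := bisim_weak hqq2 hw1
      refine ⟨q₁, q₄, ?_, ?_, ?_⟩
      · rw [hβ, htau_res]; exact weak_tau_refl _
      · rw [hβ, hres_tau]; exact hw4
      · exact hb
    · by_cases hab : α = β
      · -- α = β ≠ τ
        rw [← hab] at hw2
        refine ⟨q₁, q₂, ?_, ?_, ?_⟩
        · rw [← hab, hres_self]; exact weak_tau_refl _
        · rw [← hab, hres_self]; exact weak_tau_refl _
        · refine hdet (s ++ [α]) ?_ q₁ q₂ (weakSeq_append hws hw1) (weakSeq_append hws hw2)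
          intro a ha
          rcases List.mem_append.1 ha with ha | ha
          · exact hs a ha
          · rw [List.mem_singleton] at ha; exact ha ▸ hα
      · -- hard case: α ≠ β, both non-τ
        have hsα : ∀ a ∈ s ++ [α], a ≠ τ := by
          intro a ha
          rcases List.mem_append.1 ha with ha | ha
          · exact hs a ha
          · rw [List.mem_singleton] at ha; exact ha ▸ hα
        have hsβ : ∀ a ∈ s ++ [β], a ≠ τ := by
          intro a ha
          rcases List.mem_append.1 ha with ha | ha
          · exact hs a ha
          · rw [List.mem_singleton] at ha; exact ha ▸ hβ
        have hws2 : WeakSeq step τ (s ++ [β]) p q₂ := weakSeq_append hws hw2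
        obtain ⟨ht2, -⟩ | ⟨-, a₂, b₂, t2, s2, t2'⟩ := hw2
        · exact absurd ht2 hβ
        -- a₂ is a derivative of p
        have hda₂ : Deriv step τ p a₂ :=
          Relation.ReflTransGen.tail hq ⟨τ, tau_weak t2⟩
        -- q ≈ a₂ by determinacy (τ-inertness)
        have hqa₂ : Bisim step τ q a₂ :=
          hdet s hs q a₂ hws (weakSeq_tau hws t2)
        -- a₂ answers the weak α-move of q
        obtain ⟨r, hwr, -⟩ := bisim_weak hqa₂ hw1
        obtain ⟨ht, -⟩ | ⟨-, a₂', b', t3, s3, -⟩ := hwr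
        · exact absurd ht hα
        -- push the strong β-step of a₂ along the τ-steps to a₂'
        obtain ⟨b₂'', s4, t4⟩ := htaucomm a₂ hda₂ β a₂' b₂ hβ t3 s2
        have hda₂' : Deriv step τ p a₂' :=
          Relation.ReflTransGen.tail hda₂ ⟨τ, tau_weak t3⟩
        -- strong diamond at a₂'
        obtain ⟨q₃', q₄', st3, st4, heq⟩ :=
          hcomm a₂' hda₂' α β b' b₂'' hab hα hβ hcab s3 s4
        -- q₁ ≈ b' by determinacy along s ++ [α]
        have hwb' : Weak step τ α q b' :=
          Or.inr ⟨hα, a₂', b', Relation.ReflTransGen.trans t2 t3, s3,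
            Relation.ReflTransGen.refl⟩
        have hb1 : Bisim step τ q₁ b' :=
          hdet (s ++ [α]) hsα q₁ b' (weakSeq_append hws hw1) (weakSeq_append hws hwb')
        -- q₂ ≈ b₂'' by determinacy along s ++ [β]
        have hwb₂'' : Weak step τ β q b₂'' :=
          Or.inr ⟨hβ, a₂', b₂'', Relation.ReflTransGen.trans t2 t3, s4,
            Relation.ReflTransGen.refl⟩
        have hb2 : Bisim step τ q₂ b₂'' :=
          hdet (s ++ [β]) hsβ q₂ b₂'' hws2 (weakSeq_append hws hwb₂'')
        -- transfer the residual steps through the bisimulations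
        obtain ⟨q₃, hwq₃, hb3⟩ := bisim_weak (bisim_symm hb1) (step_weak st3)
        obtain ⟨q₄, hwq₄, hb4⟩ := bisim_weak (bisim_symm hb2) (step_weak st4)
        exact ⟨q₃, q₄, hwq₃, hwq₄,
          bisim_trans (bisim_symm hb3) (bisim_trans (hequiv_bisim _ _ heq) hb4)⟩
end
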